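/- For f, g ∈ L¹(ℝᴺ), the convolution (f ⊗ g)(x) = √(∏ₖ bₖ/iᴺ) · e^{-i∑ₖ aₖxₖ²} · ((f·e^{i∑ₖ aₖxₖ²}) ⋆ (g·e^{i∑ₖ aₖxₖ²}))(x) belongs to L¹(ℝᴺ), and its L¹ norm satisfies ‖f ⊗ g‖₁ ≤ √((2π)ᴺ ∏ₖ bₖ) · ‖f‖₁ · ‖g‖₁. -/

import Mathlib

open MeasureTheory Real Filter Topology

open Convolution

noncomputable section

/-- normalized multidimensional convolution `(f ⋆ g)(x) = (2π)^{-N/2} ∫ f(τ) g(x-τ) dτ`. -/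
def nconv {N : ℕ} (f g : (Fin N → ℝ) → ℂ) (x : Fin N → ℝ) : ℂ :=
  Complex.ofReal ((2 * Real.pi) ^ (-(N : ℝ) / 2)) * ∫ τ, f τ * g (x - τ)

/-- the QPFT-adapted convolution of type 1. -/
def qconv {N : ℕ} (a b : Fin N → ℝ) (f g : (Fin N → ℝ) → ℂ) (x : Fin N → ℝ) : ℂ :=
  ((∏ k, (b k : ℂ)) / Complex.I ^ N) ^ ((1 : ℂ) / 2) *
    Complex.exp (-(Complex.I * Complex.ofReal (∑ k, a k * x k ^ 2))) *
    nconv (fun t => f t * Complex.exp (Complex.I * Complex.ofReal (∑ k, a k * t k ^ 2)))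
      (fun t => g t * Complex.exp (Complex.I * Complex.ofReal (∑ k, a k * t k ^ 2))) x

set_option maxHeartbeats 2000000 in
theorem qconv_mem_L1_and_norm_bound {N : ℕ} (a b : Fin N → ℝ) (hb : ∀ k, 0 < b k)
    (f g : (Fin N → ℝ) → ℂ) (hf : Integrable f) (hg : Integrable g) :
    Integrable (qconv a b f g) ∧
      (2 * Real.pi) ^ (-(N : ℝ) / 2) * (∫ x, ‖qconv a b f g x‖) ≤
        Real.sqrt ((2 * Real.pi) ^ N * ∏ k, b k) *
          ((2 * Real.pi) ^ (-(N : ℝ) / 2) * ∫ x, ‖f x‖) *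
          ((2 * Real.pi) ^ (-(N : ℝ) / 2) * ∫ x, ‖g x‖) := by
  set E : (Fin N → ℝ) → ℂ :=
    fun t => Complex.exp (Complex.I * Complex.ofReal (∑ k, a k * t k ^ 2)) with hE
  have hEnorm : ∀ t, ‖E t‖ = 1 := by
    intro t
    simp [hE, Complex.norm_exp, ← Complex.ofReal_pow]
  have hEcont : Continuous E := by
    apply Complex.continuous_exp.comp
    fun_prop
  set F : (Fin N → ℝ) → ℂ := fun t => f t * E t with hFdef
  set G : (Fin N → ℝ) → ℂ := fun t => g t * E t with hGdef
  have hFn : ∀ t, ‖F t‖ = ‖f t‖ := fun t => by simp [hFdef, hEnorm t]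
  have hGn : ∀ t, ‖G t‖ = ‖g t‖ := fun t => by simp [hGdef, hEnorm t]
  have hF : Integrable F := by
    refine hf.norm.mono' (hf.1.mul hEcont.aestronglyMeasurable) ?_
    exact ae_of_all _ fun t => by rw [hFn t]
  have hG : Integrable G := by
    refine hg.norm.mono' (hg.1.mul hEcont.aestronglyMeasurable) ?_
    exact ae_of_all _ fun t => by rw [hGn t]
  set L : ℂ →L[ℝ] ℂ →L[ℝ] ℂ := ContinuousLinearMap.mul ℝ ℂ with hL
  have hconv : Integrable (F ⋆[L] G) := hF.integrable_convolution L hG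
  set K : ℂ := ((∏ k, (b k : ℂ)) / Complex.I ^ N) ^ ((1 : ℂ) / 2) with hK
  set c : ℝ := (2 * Real.pi) ^ (-(N : ℝ) / 2) with hc
  have hcpos : 0 < c := Real.rpow_pos_of_pos (by positivity) _
  have hP : 0 < ∏ k, b k := Finset.prod_pos fun k _ => hb k
  have hKn : ‖K‖ = Real.sqrt (∏ k, b k) := by
    have hz : ((∏ k, (b k : ℂ)) / Complex.I ^ N) ≠ 0 := by
      apply div_ne_zero
      · rw [show (∏ k, (b k : ℂ)) = ((∏ k, b k : ℝ) : ℂ) by push_cast; ring]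
        exact_mod_cast hP.ne'
      · exact pow_ne_zero _ Complex.I_ne_zero
    rw [hK, Complex.norm_cpow_of_ne_zero hz]
    simp only [Complex.div_re]
    rw [show ((1:ℂ)/2).im = 0 by norm_num, mul_zero, Real.exp_zero, div_one]
    rw [norm_div, show (∏ k, (b k : ℂ)) = ((∏ k, b k : ℝ) : ℂ) by push_cast; ring]
    simp [Complex.norm_real, Real.sqrt_eq_rpow, show ((1:ℂ)/2).re = 1/2 by norm_num]
    congr 1
    exact Finset.prod_congr rfl fun k _ => abs_of_pos (hb k)
  -- identity: qconv = (K * exp(-...) * c) * conv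
  have hqe : ∀ x, qconv a b f g x =
      (K * Complex.exp (-(Complex.I * Complex.ofReal (∑ k, a k * x k ^ 2))) * (c:ℂ)) *
        (F ⋆[L] G) x := by
    intro x
    simp only [qconv, nconv, hK, hc]
    rw [convolution_def]
    simp only [hL, ContinuousLinearMap.mul_apply']
    ring
  have hqn : ∀ x, ‖qconv a b f g x‖ = Real.sqrt (∏ k, b k) * c * ‖(F ⋆[L] G) x‖ := by
    intro x
    rw [hqe x]
    simp [norm_mul, hKn, Complex.norm_exp, abs_of_pos hcpos,
      ← Complex.ofReal_pow]
  have hmcont : Continuous fun x : Fin N → ℝ =>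
      K * Complex.exp (-(Complex.I * Complex.ofReal (∑ k, a k * x k ^ 2))) * (c:ℂ) := by
    apply Continuous.mul (continuous_const.mul ?_) continuous_const
    apply Complex.continuous_exp.comp
    fun_prop
  have hqint : Integrable (qconv a b f g) := by
    refine ((hconv.norm.const_mul (Real.sqrt (∏ k, b k) * c)).mono'
      ?_ (ae_of_all _ fun x => ?_))
    · exact ((hmcont.aestronglyMeasurable.mul hconv.1).congr
        (ae_of_all _ fun x => (hqe x).symm))
    · rw [hqn x]
  refine ⟨hqint, ?_⟩
  -- norm bound
  have hLn : Integrable ((fun t => ‖f t‖) ⋆[ContinuousLinearMap.mul ℝ ℝ] (fun t => ‖g t‖)) :=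
    hf.norm.integrable_convolution _ hg.norm
  have hpt : ∀ x, ‖(F ⋆[L] G) x‖ ≤
      ((fun t => ‖f t‖) ⋆[ContinuousLinearMap.mul ℝ ℝ] (fun t => ‖g t‖)) x := by
    intro x
    rw [convolution_def, convolution_def]
    simp only [hL, ContinuousLinearMap.mul_apply']
    calc ‖∫ t, F t * G (x - t)‖ ≤ ∫ t, ‖F t * G (x - t)‖ := norm_integral_le_integral_norm _
    _ = ∫ t, ‖f t‖ * ‖g (x - t)‖ := by
        congr 1; ext t; rw [norm_mul, hFn t, hGn (x - t)]
  have hIconv : ∫ x, ‖(F ⋆[L] G) x‖ ≤ (∫ x, ‖f x‖) * ∫ x, ‖g x‖ := by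
    calc ∫ x, ‖(F ⋆[L] G) x‖
        ≤ ∫ x, ((fun t => ‖f t‖) ⋆[ContinuousLinearMap.mul ℝ ℝ] (fun t => ‖g t‖)) x :=
          integral_mono hconv.norm hLn hpt
      _ = (∫ x, ‖f x‖) * ∫ x, ‖g x‖ := by
          rw [integral_convolution _ hf.norm hg.norm]; simp
  have hIq : ∫ x, ‖qconv a b f g x‖ =
      Real.sqrt (∏ k, b k) * c * ∫ x, ‖(F ⋆[L] G) x‖ := by
    simp_rw [hqn]; rw [integral_const_mul]
  rw [hIq]
  have hsq : Real.sqrt ((2 * Real.pi) ^ N * ∏ k, b k) =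
      (2 * Real.pi) ^ ((N : ℝ) / 2) * Real.sqrt (∏ k, b k) := by
    rw [Real.sqrt_mul (by positivity), Real.sqrt_eq_rpow, ← Real.rpow_natCast (2*Real.pi) N,
      ← Real.rpow_mul (by positivity)]
    ring_nf
  rw [hsq]
  have hA : 0 ≤ ∫ x, ‖f x‖ := integral_nonneg fun x => norm_nonneg _
  have hB : 0 ≤ ∫ x, ‖g x‖ := integral_nonneg fun x => norm_nonneg _
  have h1 : (1:ℝ) ≤ (2 * Real.pi) ^ ((N : ℝ) / 2) :=
    Real.one_le_rpow (by nlinarith [Real.pi_gt_three]) (by positivity)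
  have hs : 0 ≤ Real.sqrt (∏ k, b k) := Real.sqrt_nonneg _
  set s := Real.sqrt (∏ k, b k) with hsdef
  set A := ∫ x, ‖f x‖ with hAdef
  set B := ∫ x, ‖g x‖ with hBdef
  set C := ∫ x, ‖(F ⋆[L] G) x‖ with hCdef
  calc c * (s * c * C) = s * c * c * C := by ring
    _ ≤ s * c * c * (A * B) :=
        mul_le_mul_of_nonneg_left hIconv (by positivity)
    _ = 1 * (s * (c * A) * (c * B)) := by ring
    _ ≤ (2 * Real.pi) ^ ((N : ℝ) / 2) * (s * (c * A) * (c * B)) :=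
        mul_le_mul_of_nonneg_right h1
          (mul_nonneg (mul_nonneg hs (mul_nonneg hcpos.le hA)) (mul_nonneg hcpos.le hB))
    _ = (2 * Real.pi) ^ ((N : ℝ) / 2) * s * (c * A) * (c * B) := by ring
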